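/- Let L/K be a finite abelian Galois extension of number fields with Galois group G of exponent n, and fix an embedding of L(ζ_n) into ℂ. Then for every α ∈ 𝓞_L, the discriminant over K of the family (g(α))_{g∈G} equals the square of the product of all resolvents: Disc({g(α) : g ∈ G}/𝓞_K) = ∏_{χ ∈ Ĝ} ⟨α|χ⟩², where the product runs over all characters χ of G and the equality holds in L(ζ_n) (viewing K inside L(ζ_n)). -/

import Mathlib

noncomputable section

open scoped Classical

open IntermediateField

/-- The standard choice of primitive `n`-th root of unity, `ζ_n = e^{2πi/n}`. -/
noncomputable def zetaC (n : ℕ) : ℂ := Complex.exp (2 * Real.pi * Complex.I / n)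

/-- The resolvent `⟨α|χ⟩ = Σ_{g ∈ Gal(L/K)} χ(g⁻¹)·g(α) ∈ ℂ` attached to `α ∈ L` and a
character `χ` of `Gal(L/K)`, for subfields `K ⊆ L` of `ℂ`. -/
noncomputable def resolventC {K : IntermediateField ℚ ℂ} (L : IntermediateField ↥K ℂ)
    (α : ↥L) (χ : (↥L ≃ₐ[↥K] ↥L) →* ℂˣ) : ℂ :=
  ∑ᶠ g : ↥L ≃ₐ[↥K] ↥L, ((χ g⁻¹ : ℂˣ) : ℂ) * ((g α : ↥L) : ℂ)

/-- Orthogonality: a nontrivial `ℂˣ`-valued character of a finite group sums to zero. -/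
lemma sum_char_eq_zero {G : Type*} [Group G] [Fintype G] (ψ : G →* ℂˣ) (hψ : ψ ≠ 1) :
    ∑ g : G, ((ψ g : ℂˣ) : ℂ) = 0 := by
  obtain ⟨x, hx⟩ : ∃ x, ψ x ≠ 1 := by
    by_contra h
    push_neg at h
    exact hψ (MonoidHom.ext fun y => h y)
  have h1 : ∑ g : G, ((ψ g : ℂˣ) : ℂ) = ((ψ x : ℂˣ) : ℂ) * ∑ g : G, ((ψ g : ℂˣ) : ℂ) := by
    rw [Finset.mul_sum]
    refine (Fintype.sum_equiv (Equiv.mulLeft x) _ _ fun g => ?_).symm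
    simp [map_mul]
  have hx' : ((ψ x : ℂˣ) : ℂ) ≠ 1 := fun h => hx (Units.ext (by simpa using h))
  have h2 : (1 - ((ψ x : ℂˣ) : ℂ)) * ∑ g : G, ((ψ g : ℂˣ) : ℂ) = 0 := by
    rw [sub_mul, one_mul, ← h1, sub_self]
  rcases mul_eq_zero.mp h2 with h | h
  · exact absurd (by linear_combination -h) hx'
  · exact h

/-- Dedekind's group determinant identity (squared), for finite abelian groups whose dual is
given by some bijection `ν`. -/
lemma dedekind_det {G : Type*} [CommGroup G] [Fintype G] [Fintype (G →* ℂˣ)]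
    (ν : (G →* ℂˣ) ≃ G) (f : G → ℂ) :
    (Matrix.of fun g h : G => f (h * g)).det ^ 2
      = (∏ χ : G →* ℂˣ, ∑ t : G, ((χ t : ℂˣ) : ℂ) * f t) ^ 2 := by
  classical
  set S : (G →* ℂˣ) → ℂ := fun χ => ∑ t : G, ((χ t : ℂˣ) : ℂ) * f t with hS
  set M : Matrix G G ℂ := Matrix.of fun g h : G => f (h * g) with hM
  set U : Matrix G G ℂ := Matrix.of fun g h => ((ν.symm h g : ℂˣ) : ℂ) with hU
  set D : Matrix G G ℂ := Matrix.diagonal fun h => S (ν.symm h) with hD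
  set B : Matrix G G ℂ := Matrix.of fun h g => ((ν.symm h g⁻¹ : ℂˣ) : ℂ) / (Fintype.card G : ℂ)
    with hB
  have hMU : M * U = (U.submatrix (fun g : G => g⁻¹) id) * D := by
    ext g h
    rw [Matrix.mul_apply, Matrix.mul_diagonal]
    have key : ∑ k : G, M g k * U k h
        = ∑ t : G, ((ν.symm h g⁻¹ : ℂˣ) : ℂ) * (((ν.symm h t : ℂˣ) : ℂ) * f t) := by
      refine (Fintype.sum_equiv (Equiv.mulRight g⁻¹) _ _ fun t => ?_).symm
      simp only [hM, hU, Equiv.coe_mulRight, Matrix.of_apply, inv_mul_cancel_right]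
      rw [map_mul, map_inv]
      push_cast
      ring
    rw [key, ← Finset.mul_sum]
    rfl
  have hBU : B * U = 1 := by
    ext h h'
    rw [Matrix.mul_apply, Matrix.one_apply]
    have key : ∑ g : G, B h g * U g h'
        = (∑ g : G, ((((ν.symm h)⁻¹ * ν.symm h') g : ℂˣ) : ℂ)) / (Fintype.card G : ℂ) := by
      rw [Finset.sum_div]
      refine Finset.sum_congr rfl fun g _ => ?_
      simp only [hB, hU, Matrix.of_apply, MonoidHom.mul_apply, MonoidHom.inv_apply, map_inv]
      push_cast
      ring
    rw [key]
    by_cases hhh : h = h'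
    · subst hhh
      simp [div_eq_one_iff_eq, Fintype.card_ne_zero]
    · have hne : (ν.symm h)⁻¹ * ν.symm h' ≠ 1 := by
        intro h0
        exact hhh (ν.symm.injective (inv_mul_eq_one.mp h0))
      rw [sum_char_eq_zero _ hne, zero_div, if_neg hhh]
  have hdetU : U.det ≠ 0 := by
    intro h0
    have := congrArg Matrix.det hBU
    rw [Matrix.det_mul, Matrix.det_one, h0, mul_zero] at this
    exact zero_ne_one this
  have hdetV : (U.submatrix (fun g : G => g⁻¹) id).det
      = (((Equiv.Perm.sign (Equiv.inv G) : ℤ) : ℂ)) * U.det := by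
    exact_mod_cast Matrix.det_permute (Equiv.inv G) U
  have hmain : M.det * U.det
      = ((((Equiv.Perm.sign (Equiv.inv G) : ℤ) : ℂ)) * ∏ h : G, S (ν.symm h)) * U.det := by
    have := congrArg Matrix.det hMU
    rw [Matrix.det_mul, Matrix.det_mul, hdetV, hD, Matrix.det_diagonal] at this
    rw [this]; ring
  have hdetM : M.det = (((Equiv.Perm.sign (Equiv.inv G) : ℤ) : ℂ)) * ∏ h : G, S (ν.symm h) :=
    mul_right_cancel₀ hdetU hmain
  rw [hdetM, mul_pow]
  rcases Int.units_eq_one_or (Equiv.Perm.sign (Equiv.inv G)) with hs | hs <;>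
    rw [hs] <;>
    push_cast <;>
    rw [← Equiv.prod_comp ν.symm S] <;>
    ring

set_option maxHeartbeats 1000000 in
set_option synthInstance.maxHeartbeats 1000000 in
/-- Let `L/K` be a finite abelian Galois extension of number fields
(inside `ℂ`) whose Galois group has exponent `n`.  Then for every `α ∈ 𝓞_L`,
`Disc({g(α) : g ∈ G}/𝓞_K) = ∏_{χ ∈ Ĝ} ⟨α|χ⟩²`, the product running over all characters
of `G` and the equality taking place in `ℂ` (which contains `L(ζ_n)`). -/
theorem stmt9 (K : IntermediateField ℚ ℂ) (L : IntermediateField ↥K ℂ)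
    [FiniteDimensional ↥K ↥L] [IsGalois ↥K ↥L]
    (hab : ∀ σ τ : ↥L ≃ₐ[↥K] ↥L, σ * τ = τ * σ)
    (n : ℕ) (hn : Monoid.exponent (↥L ≃ₐ[↥K] ↥L) = n)
    (α : ↥L) (hα : IsIntegral ℤ α) :
    ((Algebra.discr ↥K (fun g : ↥L ≃ₐ[↥K] ↥L => g α) : ↥K) : ℂ) =
      ∏ᶠ χ : (↥L ≃ₐ[↥K] ↥L) →* ℂˣ, (resolventC L α χ) ^ 2 := by
  classical
  simp only [resolventC]
  letI : CommGroup (↥L ≃ₐ[↥K] ↥L) :=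
    { (inferInstance : Group (↥L ≃ₐ[↥K] ↥L)) with mul_comm := hab }
  haveI : Normal (↥K) (↥L) := IsGalois.to_normal
  haveI : NeZero ((Monoid.exponent (↥L ≃ₐ[↥K] ↥L) : ℂ)) :=
    ⟨Nat.cast_ne_zero.mpr Monoid.exponent_ne_zero_of_finite⟩
  obtain ⟨ν⟩ := CommGroup.monoidHom_mulEquiv_of_hasEnoughRootsOfUnity (↥L ≃ₐ[↥K] ↥L) ℂ
  haveI : Fintype ((↥L ≃ₐ[↥K] ↥L) →* ℂˣ) := Fintype.ofEquiv _ ν.toEquiv.symm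
  set e : (↥L ≃ₐ[↥K] ↥L) ≃ (↥L →ₐ[↥K] ℂ) := (Normal.algHomEquivAut (↥K) ℂ (↥L)).symm with he
  set f : (↥L ≃ₐ[↥K] ↥L) → ℂ := fun g => ((g α : ↥L) : ℂ) with hf
  have hdisc : ((Algebra.discr ↥K (fun g : ↥L ≃ₐ[↥K] ↥L => g α) : ↥K) : ℂ)
      = (Algebra.embeddingsMatrixReindex (↥K) ℂ (fun g : ↥L ≃ₐ[↥K] ↥L => g α) e).det ^ 2 :=
    Algebra.discr_eq_det_embeddingsMatrixReindex_pow_two (↥K) ℂ _ e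
  have hMat : Algebra.embeddingsMatrixReindex (↥K) ℂ (fun g : ↥L ≃ₐ[↥K] ↥L => g α) e
      = Matrix.of fun g h : ↥L ≃ₐ[↥K] ↥L => f (h * g) := by
    ext g h
    simp only [Algebra.embeddingsMatrixReindex, Algebra.embeddingsMatrix, Matrix.reindex_apply,
      Matrix.submatrix_apply, Equiv.refl_symm, Equiv.coe_refl, id_eq, Matrix.of_apply,
      Equiv.symm_symm, he, Normal.algHomEquivAut_symm_apply, AlgHom.coe_comp,
      Function.comp_apply, AlgEquiv.toAlgHom_eq_coe, AlgHom.coe_coe]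
    rfl
  rw [hdisc, hMat, dedekind_det ν.toEquiv f, finprod_eq_prod_of_fintype]
  have hres : ∀ χ : (↥L ≃ₐ[↥K] ↥L) →* ℂˣ,
      (∑ᶠ g : ↥L ≃ₐ[↥K] ↥L, ((χ g⁻¹ : ℂˣ) : ℂ) * ((g α : ↥L) : ℂ))
        = ∑ t : ↥L ≃ₐ[↥K] ↥L, ((χ⁻¹ t : ℂˣ) : ℂ) * f t := by
    intro χ
    rw [finsum_eq_sum_of_fintype]
    refine Finset.sum_congr rfl fun t _ => ?_
    simp [map_inv, hf]
  calc (∏ χ : (↥L ≃ₐ[↥K] ↥L) →* ℂˣ, ∑ t : ↥L ≃ₐ[↥K] ↥L, ((χ t : ℂˣ) : ℂ) * f t) ^ 2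
      = ∏ χ : (↥L ≃ₐ[↥K] ↥L) →* ℂˣ, (∑ t : ↥L ≃ₐ[↥K] ↥L, ((χ t : ℂˣ) : ℂ) * f t) ^ 2 := by
        rw [← Finset.prod_pow]
    _ = ∏ χ : (↥L ≃ₐ[↥K] ↥L) →* ℂˣ, (∑ t : ↥L ≃ₐ[↥K] ↥L, ((χ⁻¹ t : ℂˣ) : ℂ) * f t) ^ 2 :=
        (Equiv.prod_comp (Equiv.inv ((↥L ≃ₐ[↥K] ↥L) →* ℂˣ))
          (fun χ => (∑ t : ↥L ≃ₐ[↥K] ↥L, ((χ t : ℂˣ) : ℂ) * f t) ^ 2)).symm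
    _ = ∏ χ : (↥L ≃ₐ[↥K] ↥L) →* ℂˣ,
          (∑ᶠ g : ↥L ≃ₐ[↥K] ↥L, ((χ g⁻¹ : ℂˣ) : ℂ) * ((g α : ↥L) : ℂ)) ^ 2 := by
        refine Finset.prod_congr rfl fun χ _ => ?_
        rw [hres]

end
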